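/- For every nonzero real number λ and all integers m, n ≥ 0 such that binom(λ-1, m) ≠ 0, the degenerate hyperharmonic number H_{n,λ}^{(m+1)} satisfies H_{n,λ}^{(m+1)} = ((-1)^m / binom(λ-1, m)) · [ ∑_{l=0}^{n} H_{l,λ} · C(m+n-l-1, n-l) + binom(m+n-λ, n) · H_{m,λ} - C(n+m, n) · H_{m,λ} ], as an identity of real numbers. -/

import Mathlib

/-- The generalized binomial coefficient `binom(x, k) = x(x-1)⋯(x-k+1)/k!`
for a real number `x` and a natural number `k`. -/
noncomputable def genBinom (x : ℝ) (k : ℕ) : ℝ :=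
  (∏ i ∈ Finset.range k, (x - i)) / (k.factorial : ℝ)

/-- The degenerate harmonic numbers: `H_{0,λ} = 0` and
`H_{n,λ} = ∑_{k=1}^{n} binom(λ-1, k-1) ⬝ (-1)^{k-1} / k` for `n ≥ 1`. -/
noncomputable def degHarmonic (lam : ℝ) (n : ℕ) : ℝ :=
  ∑ k ∈ Finset.Icc 1 n, genBinom (lam - 1) (k - 1) * (-1 : ℝ) ^ (k - 1) / (k : ℝ)

/-- The degenerate hyperharmonic numbers `H_{n,λ}^{(r)}`:
`H_{0,λ}^{(r)} = 0` for all `r ≥ 0`, `H_{n,λ}^{(0)} = (1/λ) ⬝ binom(λ, n) ⬝ (-1)^{n-1}`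
for `n ≥ 1`, and `H_{n,λ}^{(r)} = ∑_{k=1}^{n} H_{k,λ}^{(r-1)}` for `n, r ≥ 1`. -/
noncomputable def degHyperharmonic (lam : ℝ) : ℕ → ℕ → ℝ
  | 0, n => if n = 0 then 0 else (1 / lam) * genBinom lam n * (-1 : ℝ) ^ (n - 1)
  | r + 1, n => ∑ k ∈ Finset.Icc 1 n, degHyperharmonic lam r k

lemma genBinom_zero (x : ℝ) : genBinom x 0 = 1 := by simp [genBinom]

lemma genBinom_succ (x : ℝ) (k : ℕ) :
    genBinom x (k + 1) = genBinom x k * (x - k) / (k + 1) := by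
  simp only [genBinom, Finset.prod_range_succ, Nat.factorial_succ]
  push_cast
  rw [mul_comm ((k:ℝ)+1), ← div_div, mul_div_right_comm]

lemma genBinom_pascal (x : ℝ) (k : ℕ) :
    genBinom (x + 1) (k + 1) = genBinom x (k + 1) + genBinom x k := by
  have hk : ((k.factorial : ℝ)) ≠ 0 := by exact_mod_cast k.factorial_ne_zero
  have h1 : ∏ i ∈ Finset.range (k+1), (x + 1 - i) = (∏ i ∈ Finset.range k, (x - i)) * (x + 1) := by
    rw [Finset.prod_range_succ']
    congr 1
    · apply Finset.prod_congr rfl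
      intro i _
      push_cast
      ring
    · norm_num
  simp only [genBinom, Finset.prod_range_succ, Nat.factorial_succ, h1]
  push_cast
  have hk1 : ((k:ℝ) + 1) ≠ 0 := by positivity
  field_simp
  ring

lemma genBinom_reflect (x : ℝ) (n : ℕ) :
    genBinom x n = (-1 : ℝ) ^ n * genBinom ((n : ℝ) - 1 - x) n := by
  unfold genBinom
  rw [← Finset.prod_range_reflect (fun i => ((n : ℝ) - 1 - x - i)) n]
  have : ∀ i ∈ Finset.range n, ((n : ℝ) - 1 - x - ((n - 1 - i : ℕ) : ℝ)) = -(x - i) := by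
    intro i hi
    have hi' : i < n := Finset.mem_range.mp hi
    have h : ((n - 1 - i : ℕ) : ℝ) = (n : ℝ) - 1 - i := by
      have : 1 + i ≤ n := by omega
      push_cast [Nat.sub_sub, Nat.cast_sub this]
      ring
    rw [h]; ring
  rw [Finset.prod_congr rfl this]
  have hp : ∀ i ∈ Finset.range n, -(x - (i:ℝ)) = (-1) * (x - i) := by intros; ring
  rw [Finset.prod_congr rfl hp, Finset.prod_mul_distrib, Finset.prod_const, Finset.card_range,
    mul_div_assoc, ← mul_assoc, ← mul_pow]
  norm_num

lemma alt_sum (x : ℝ) (n : ℕ) :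
    ∑ k ∈ Finset.range (n + 1), (-1 : ℝ) ^ k * genBinom (x + 1) k
      = (-1 : ℝ) ^ n * genBinom x n := by
  induction n with
  | zero => simp [genBinom_zero]
  | succ n ih =>
      rw [Finset.sum_range_succ, ih, genBinom_pascal]
      ring

lemma hockey (r n : ℕ) :
    ∑ k ∈ Finset.range (n + 1), (k + r - 1).choose k = (n + r).choose n := by
  induction n with
  | zero => simp
  | succ n ih =>
      rw [Finset.sum_range_succ, ih]
      have h1 : (n + 1) + r - 1 = n + r := by omega
      have h2 : n + 1 + r = (n + r) + 1 := by omega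
      rw [h1, h2, Nat.choose_succ_succ (n + r) n]

lemma sum_Icc_one (g : ℕ → ℝ) (n : ℕ) :
    ∑ k ∈ Finset.Icc 1 n, g k = (∑ k ∈ Finset.range (n + 1), g k) - g 0 := by
  have : Finset.Icc 1 n = Finset.Ico 1 (n + 1) := by
    ext a; simp [Nat.lt_succ_iff]
  rw [this, Finset.sum_Ico_eq_sum_range, Finset.sum_range_succ']
  simp [Nat.add_comm]

lemma degHarmonic_closed (lam : ℝ) (hlam : lam ≠ 0) (n : ℕ) :
    degHarmonic lam n = (1 / lam) * (1 - (-1 : ℝ) ^ n * genBinom (lam - 1) n) := by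
  induction n with
  | zero => simp [degHarmonic, genBinom_zero]
  | succ n ih =>
      unfold degHarmonic at ih ⊢
      rw [Finset.sum_Icc_succ_top (Nat.one_le_iff_ne_zero.mpr (Nat.succ_ne_zero n)), ih]
      simp only [Nat.succ_sub_one]
      rw [genBinom_succ]
      have hn : ((n : ℝ) + 1) ≠ 0 := by positivity
      push_cast
      field_simp
      ring

lemma degHyperharmonic_zero (lam : ℝ) (r : ℕ) : degHyperharmonic lam r 0 = 0 := by
  cases r <;> simp [degHyperharmonic]

lemma degHyperharmonic_closed (lam : ℝ) (r n : ℕ) :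
    degHyperharmonic lam r n =
      (1 / lam) * (((n + r - 1).choose n : ℝ) - (-1 : ℝ) ^ n * genBinom (lam - r) n) := by
  induction r generalizing n with
  | zero =>
      simp only [degHyperharmonic]
      rcases n with _ | s
      · simp [genBinom_zero]
      · rw [if_neg (Nat.succ_ne_zero s)]
        have h1 : s + 1 + 0 - 1 = s := by omega
        rw [h1, Nat.choose_eq_zero_of_lt (Nat.lt_succ_self s)]
        simp only [Nat.succ_sub_one, Nat.cast_zero, sub_zero, Nat.cast_ofNat]
        rw [pow_succ]
        ring
  | succ r ih =>
      show (∑ k ∈ Finset.Icc 1 n, degHyperharmonic lam r k) = _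
      rw [sum_Icc_one (fun k => degHyperharmonic lam r k) n]
      simp only [degHyperharmonic_zero, sub_zero]
      have hsum : ∀ k ∈ Finset.range (n + 1), degHyperharmonic lam r k =
          (1 / lam) * (((k + r - 1).choose k : ℝ) - (-1 : ℝ) ^ k * genBinom ((lam - r - 1) + 1) k) := by
        intro k _
        rw [ih k]
        norm_num
      rw [Finset.sum_congr rfl hsum, ← Finset.mul_sum, Finset.sum_sub_distrib, alt_sum]
      have hh : ∑ k ∈ Finset.range (n + 1), (((k + r - 1).choose k : ℕ) : ℝ)
          = ((n + r).choose n : ℝ) := by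
        rw [← Nat.cast_sum, hockey]
      rw [hh]
      have h2 : n + (r + 1) - 1 = n + r := by omega
      rw [h2]
      push_cast
      ring_nf

lemma key_rec (lam : ℝ) (m n : ℕ) :
    (∑ l ∈ Finset.range (n + 2),
        (-1 : ℝ) ^ l * genBinom (lam - 1) l * (((m + 1) + (n + 1) - l - 1).choose ((n + 1) - l) : ℝ))
      = (∑ l ∈ Finset.range (n + 1),
          (-1 : ℝ) ^ l * genBinom (lam - 1) l * (((m + 1) + n - l - 1).choose (n - l) : ℝ))
        + (∑ l ∈ Finset.range (n + 2),
          (-1 : ℝ) ^ l * genBinom (lam - 1) l * ((m + (n + 1) - l - 1).choose ((n + 1) - l) : ℝ)) := by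
  rw [Finset.sum_range_succ, Finset.sum_range_succ
    (fun l => (-1 : ℝ) ^ l * genBinom (lam - 1) l * ((m + (n + 1) - l - 1).choose ((n + 1) - l) : ℝ))]
  have hlast : ((m + 1) + (n + 1) - (n + 1) - 1).choose ((n + 1) - (n + 1))
      = (m + (n + 1) - (n + 1) - 1).choose ((n + 1) - (n + 1)) := by
    simp
  have hmain : ∀ l ∈ Finset.range (n + 1),
      (-1 : ℝ) ^ l * genBinom (lam - 1) l * (((m + 1) + (n + 1) - l - 1).choose ((n + 1) - l) : ℝ)
        = (-1 : ℝ) ^ l * genBinom (lam - 1) l * (((m + 1) + n - l - 1).choose (n - l) : ℝ)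
          + (-1 : ℝ) ^ l * genBinom (lam - 1) l * ((m + (n + 1) - l - 1).choose ((n + 1) - l) : ℝ) := by
    intro l hl
    have hl' : l ≤ n := Nat.lt_succ_iff.mp (Finset.mem_range.mp hl)
    have e1 : (m + 1) + (n + 1) - l - 1 = (m + n - l) + 1 := by omega
    have e2 : (n + 1) - l = (n - l) + 1 := by omega
    have e3 : (m + 1) + n - l - 1 = m + n - l := by omega
    have e4 : m + (n + 1) - l - 1 = m + n - l := by omega
    rw [e1, e2, e3, e4, Nat.choose_succ_succ]
    push_cast
    ring
  rw [Finset.sum_congr rfl hmain, Finset.sum_add_distrib, hlast]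
  ring

lemma key (lam : ℝ) (m n : ℕ) :
    ∑ l ∈ Finset.range (n + 1),
        (-1 : ℝ) ^ l * genBinom (lam - 1) l * ((m + n - l - 1).choose (n - l) : ℝ)
      = (-1 : ℝ) ^ n * genBinom (lam - 1 - m) n := by
  induction m generalizing n with
  | zero =>
      rw [Finset.sum_eq_single_of_mem n (Finset.self_mem_range_succ n)]
      · simp
      · intro l hl hln
        have hl' : l < n := by
          have := Nat.lt_succ_iff.mp (Finset.mem_range.mp hl); omega
        have : 0 + n - l - 1 < n - l := by omega
        rw [Nat.choose_eq_zero_of_lt this]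
        simp
  | succ m ih =>
      induction n with
      | zero => simp [genBinom_zero]
      | succ n ihn =>
          rw [key_rec, ihn, ih (n + 1)]
          have hc : lam - 1 - ((m : ℝ) + 1) + 1 = lam - 1 - m := by ring
          have hp := genBinom_pascal (lam - 1 - ((m : ℝ) + 1)) n
          rw [hc] at hp
          push_cast
          rw [hp]
          ring

lemma csum (m n : ℕ) :
    ∑ l ∈ Finset.range (n + 1), (m + n - l - 1).choose (n - l) = (n + m).choose n := by
  rw [← Finset.sum_range_reflect]
  have h : ∀ j ∈ Finset.range (n + 1),
      (m + n - (n + 1 - 1 - j) - 1).choose (n - (n + 1 - 1 - j)) = (j + m - 1).choose j := by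
    intro j hj
    have hj' : j ≤ n := Nat.lt_succ_iff.mp (Finset.mem_range.mp hj)
    congr 1 <;> omega
  rw [Finset.sum_congr rfl h, hockey]

/-- For every nonzero real `λ` and all integers `m, n ≥ 0` with `binom(λ-1, m) ≠ 0`,
`H_{n,λ}^{(m+1)} = ((-1)^m / binom(λ-1, m)) ⬝ [∑_{l=0}^{n} H_{l,λ} ⬝ C(m+n-l-1, n-l)
  + binom(m+n-λ, n) ⬝ H_{m,λ} - C(n+m, n) ⬝ H_{m,λ}]` as real numbers. -/
theorem degHyperharmonic_eq (lam : ℝ) (hlam : lam ≠ 0) (m n : ℕ)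
    (hbin : genBinom (lam - 1) m ≠ 0) :
    degHyperharmonic lam (m + 1) n =
      ((-1 : ℝ) ^ m / genBinom (lam - 1) m) *
        (∑ l ∈ Finset.range (n + 1), degHarmonic lam l * ((m + n - l - 1).choose (n - l) : ℝ) +
          genBinom ((m : ℝ) + (n : ℝ) - lam) n * degHarmonic lam m -
          ((n + m).choose n : ℝ) * degHarmonic lam m) := by
  -- abbreviations
  set B := genBinom (lam - 1) m with hB
  set G := genBinom (lam - 1 - m) n with hG
  -- LHS closed form
  have hL : degHyperharmonic lam (m + 1) n
      = (1 / lam) * (((n + m).choose n : ℝ) - (-1 : ℝ) ^ n * G) := by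
    rw [degHyperharmonic_closed]
    have e1 : n + (m + 1) - 1 = n + m := by omega
    have e2 : lam - ((m : ℕ) + 1 : ℕ) = lam - 1 - (m : ℝ) := by push_cast; ring
    rw [e1, e2]
  -- the big sum
  have hS : ∑ l ∈ Finset.range (n + 1), degHarmonic lam l * ((m + n - l - 1).choose (n - l) : ℝ)
      = (1 / lam) * (((n + m).choose n : ℝ) - (-1 : ℝ) ^ n * G) := by
    have hterm : ∀ l ∈ Finset.range (n + 1),
        degHarmonic lam l * ((m + n - l - 1).choose (n - l) : ℝ)
          = (1 / lam) * (((m + n - l - 1).choose (n - l) : ℝ))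
            - (1 / lam) * ((-1 : ℝ) ^ l * genBinom (lam - 1) l * ((m + n - l - 1).choose (n - l) : ℝ)) := by
      intro l _
      rw [degHarmonic_closed lam hlam l]
      ring
    rw [Finset.sum_congr rfl hterm, Finset.sum_sub_distrib, ← Finset.mul_sum, ← Finset.mul_sum,
      key lam m n]
    have hc : ∑ l ∈ Finset.range (n + 1), (((m + n - l - 1).choose (n - l) : ℕ) : ℝ)
        = ((n + m).choose n : ℝ) := by
      rw [← Nat.cast_sum, csum]
    rw [hc, hG]
    ring
  -- reflection for the genBinom term
  have hR : genBinom ((m : ℝ) + (n : ℝ) - lam) n = (-1 : ℝ) ^ n * G := by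
    rw [genBinom_reflect ((m : ℝ) + (n : ℝ) - lam) n]
    have : (n : ℝ) - 1 - ((m : ℝ) + (n : ℝ) - lam) = lam - 1 - m := by ring
    rw [this, hG]
  -- harmonic at m
  have hM : degHarmonic lam m = (1 / lam) * (1 - (-1 : ℝ) ^ m * B) :=
    degHarmonic_closed lam hlam m
  rw [hL, hS, hR, hM]
  have hee : (-1 : ℝ) ^ m * (-1 : ℝ) ^ m = 1 := by
    rw [← mul_pow]; norm_num
  field_simp
  linear_combination (-1) * B * (((n + m).choose n : ℝ) - (-1 : ℝ) ^ n * G) * hee
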